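/- Let (b_n) be a D-sequence, m ∈ ℕ, and let integers k_0, …, k_N satisfy |k_j| ≤ (1/(8m)) · (b_{j+1}/b_j) for all 0 ≤ j ≤ N. Then k = ∑_{j=0}^N k_j b_j satisfies: for every n ∈ ℕ, the distance from k/b_n to the nearest integer is at most 1/(4m). -/

import Mathlib

def IsDSeq (b : ℕ → ℕ) : Prop :=
  b 0 = 1 ∧ (∀ n, b n ∣ b (n + 1)) ∧ ∀ n, b n ≠ b (n + 1)

theorem stmt_10 (b : ℕ → ℕ) (hb : IsDSeq b) (m : ℕ) (hm : 0 < m)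
    (N : ℕ) (k : ℕ → ℤ)
    (hk : ∀ j ≤ N, |(k j : ℝ)| ≤ (1 / (8 * m)) * ((b (j + 1) : ℝ) / b j)) :
    ∀ n : ℕ, ∃ z : ℤ,
      |((∑ j ∈ Finset.range (N + 1), k j * (b j : ℤ) : ℤ) : ℝ) / b n - z| ≤ 1 / (4 * m) := by
  obtain ⟨h0, hdvd, hne⟩ := hb
  have hpos : ∀ n, 0 < b n := by
    intro n
    refine Nat.pos_of_ne_zero fun h => hne n ?_
    have := zero_dvd_iff.mp (h ▸ hdvd n)
    omega
  have hgrow : ∀ j, 2 * b j ≤ b (j + 1) := by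
    intro j
    obtain ⟨c, hc⟩ := hdvd j
    have hc2 : 2 ≤ c := by
      rcases Nat.lt_or_ge c 2 with h | h
      · interval_cases c
        · exfalso; exact (hpos (j+1)).ne' (by simpa using hc)
        · exfalso; exact hne j (by simpa using hc.symm)
      · exact h
    calc 2 * b j ≤ c * b j := Nat.mul_le_mul_right _ hc2
      _ = b (j + 1) := by rw [hc]; ring
  have hdvd' : ∀ i j, i ≤ j → b i ∣ b j := by
    intro i j hij
    induction j, hij using Nat.le_induction with
    | base => exact dvd_rfl
    | succ j hij ih => exact ih.trans (hdvd j)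
  have hpow : ∀ i j, i ≤ j → 2 ^ (j - i) * b i ≤ b j := by
    intro i j hij
    induction j, hij using Nat.le_induction with
    | base => simp
    | succ j hij ih =>
      have : j + 1 - i = (j - i) + 1 := by omega
      rw [this, pow_succ]
      calc 2 ^ (j - i) * 2 * b i = 2 * (2 ^ (j - i) * b i) := by ring
        _ ≤ 2 * b j := by exact Nat.mul_le_mul_left _ ih
        _ ≤ b (j + 1) := hgrow j
  intro n
  have hbn : (0:ℝ) < b n := by exact_mod_cast hpos n
  refine ⟨∑ j ∈ Finset.range (N + 1), if n ≤ j then k j * ((b j / b n : ℕ) : ℤ) else 0, ?_⟩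
  have hmR : (0:ℝ) < m := by exact_mod_cast hm
  set c : ℝ := 1 / (8 * m) with hc
  have hc0 : 0 ≤ c := by positivity
  have key : ((∑ j ∈ Finset.range (N + 1), k j * (b j : ℤ) : ℤ) : ℝ) / b n -
      ((∑ j ∈ Finset.range (N + 1), if n ≤ j then k j * ((b j / b n : ℕ) : ℤ) else 0 : ℤ) : ℝ)
      = ∑ j ∈ Finset.range (N + 1),
        (if n ≤ j then 0 else ((k j : ℝ) * b j) / b n) := by
    push_cast
    rw [Finset.sum_div, ← Finset.sum_sub_distrib]
    refine Finset.sum_congr rfl fun j _ => ?_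
    by_cases hj : n ≤ j
    · simp only [hj, if_true]
      have hd : (b n : ℤ) ∣ b j := Int.natCast_dvd_natCast.mpr (hdvd' n j hj)
      have : (((b j : ℤ) / (b n : ℤ) : ℤ) : ℝ) = (b j : ℝ) / b n := by
        rw [Int.cast_div hd (by exact_mod_cast hbn.ne')]
        push_cast; ring
      rw [this]
      field_simp; simp
    · simp [hj]
  rw [key]
  have habs : |∑ j ∈ Finset.range (N + 1),
      (if n ≤ j then 0 else ((k j : ℝ) * b j) / b n)|
      ≤ ∑ j ∈ Finset.range (N + 1),
      (if n ≤ j then 0 else c * 2 ^ (j+1) / 2 ^ n) := by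
    refine (Finset.abs_sum_le_sum_abs _ _).trans (Finset.sum_le_sum fun j hj => ?_)
    by_cases hnj : n ≤ j
    · simp [hnj]
    · simp only [hnj, if_false]
      push_neg at hnj
      have hjN : j ≤ N := by
        simp only [Finset.mem_range] at hj; omega
      have hbj : (0:ℝ) < b j := by exact_mod_cast hpos j
      have hbj1 : (0:ℝ) < b (j+1) := by exact_mod_cast hpos (j+1)
      have h1 : |(k j : ℝ) * b j / b n| = |(k j : ℝ)| * b j / b n := by
        rw [abs_div, abs_mul, abs_of_pos hbj, abs_of_pos hbn]
      rw [h1]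
      have h2 : |(k j : ℝ)| * b j / b n ≤ (c * (b (j+1) / b j)) * b j / b n := by
        gcongr
        exact hk j hjN
      refine h2.trans ?_
      have h3 : (c * ((b (j+1) : ℝ) / b j)) * b j / b n = c * (b (j+1) / b n) := by
        field_simp
      rw [h3]
      have hpw : (2:ℝ) ^ (n - (j+1)) * b (j+1) ≤ b n := by
        exact_mod_cast hpow (j+1) n (by omega)
      have h2n : (2:ℝ) ^ n = 2 ^ (j+1) * 2 ^ (n - (j+1)) := by
        rw [← pow_add]; congr 1; omega
      have h4 : (b (j+1) : ℝ) / b n ≤ 2 ^ (j+1) / 2 ^ n := by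
        rw [div_le_div_iff₀ hbn (by positivity), h2n]
        calc (b (j+1) : ℝ) * (2 ^ (j+1) * 2 ^ (n - (j+1)))
            = 2 ^ (j+1) * (2 ^ (n - (j+1)) * b (j+1)) := by ring
          _ ≤ 2 ^ (j+1) * b n := by
              exact mul_le_mul_of_nonneg_left hpw (by positivity)
      calc c * ((b (j+1):ℝ) / b n) ≤ c * (2 ^ (j+1) / 2 ^ n) :=
            mul_le_mul_of_nonneg_left h4 hc0
        _ = c * 2 ^ (j+1) / 2 ^ n := by ring
  refine habs.trans ?_
  have hsub : ∑ j ∈ Finset.range (N + 1),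
      (if n ≤ j then 0 else c * 2 ^ (j+1) / 2 ^ n)
      ≤ ∑ j ∈ Finset.range n, c * 2 ^ (j+1) / 2 ^ n := by
    rw [Finset.sum_ite, Finset.sum_const_zero, zero_add]
    refine Finset.sum_le_sum_of_subset_of_nonneg ?_ (fun j _ _ => by positivity)
    intro j hj
    simp only [Finset.mem_filter, Finset.mem_range, not_le] at hj ⊢
    exact hj.2
  refine hsub.trans ?_
  have hgs : ∑ j ∈ Finset.range n, c * 2 ^ (j+1) / 2 ^ n
      = c / 2 ^ n * ∑ j ∈ Finset.range n, (2:ℝ) ^ (j+1) := by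
    rw [Finset.mul_sum]
    refine Finset.sum_congr rfl fun j _ => by ring
  rw [hgs]
  have hgeom : ∑ j ∈ Finset.range n, (2:ℝ) ^ (j+1) ≤ 2 * 2 ^ n := by
    have : ∑ j ∈ Finset.range n, (2:ℝ) ^ (j+1) = 2 * ∑ j ∈ Finset.range n, (2:ℝ) ^ j := by
      rw [Finset.mul_sum]; exact Finset.sum_congr rfl fun j _ => by ring
    rw [this]
    have := geom_sum_eq (by norm_num : (2:ℝ) ≠ 1) n
    rw [this]
    nlinarith [pow_pos (by norm_num : (0:ℝ) < 2) n]
  calc c / 2 ^ n * ∑ j ∈ Finset.range n, (2:ℝ) ^ (j+1)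
      ≤ c / 2 ^ n * (2 * 2 ^ n) := by
        exact mul_le_mul_of_nonneg_left hgeom (by positivity)
    _ = 2 * c := by field_simp
    _ ≤ 1 / (4 * m) := by
        have : 2 * c = 1 / (4 * (m:ℝ)) := by rw [hc]; field_simp; ring
        rw [this]
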